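/- arXiv:2211.07345 — 2 statements merged into one kernel-verified Lean document; each statement's English description precedes it below -/
import Mathlib

section
/- Let N ≥ 2 be an integer, let X_{ij} ∈ {0,1} be given for all ordered pairs of distinct indices i, j ∈ {1,…,N}, and let u_1, …, u_N be integers with u_1 = 1 and 2 ≤ u_i ≤ N for all i ≠ 1, satisfying u_i − u_j + N·X_{ij} ≤ N − 1 for all i ≠ 1, j ≠ 1 with i ≠ j. Then there is no closed sequence of nodes v_0, v_1, …, v_k (k ≥ 2, v_k = v_0, consecutive nodes distinct) with v_t ≠ 1 for all t and X_{v_t v_{t+1}} = 1 for all 0 ≤ t < k; that is, the arcs selected by X contain no directed cycle avoiding node 1. -/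
/-- The Miller–Tucker–Zemlin constraints eliminate every directed cycle
(among the arcs selected by `X`) that avoids the home node 1. -/
theorem stmt_1 (N : ℕ) (hN : 2 ≤ N) (X : ℕ → ℕ → ℤ) (u : ℕ → ℤ)
    (hX : ∀ i ∈ Finset.Icc 1 N, ∀ j ∈ Finset.Icc 1 N, i ≠ j → X i j = 0 ∨ X i j = 1)
    (hu1 : u 1 = 1)
    (hul : ∀ i ∈ Finset.Icc 1 N, i ≠ 1 → 2 ≤ u i)
    (huu : ∀ i ∈ Finset.Icc 1 N, i ≠ 1 → u i ≤ (N : ℤ))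
    (hmtz : ∀ i ∈ Finset.Icc 1 N, ∀ j ∈ Finset.Icc 1 N, i ≠ 1 → j ≠ 1 → i ≠ j →
      u i - u j + (N : ℤ) * X i j ≤ (N : ℤ) - 1) :
    ¬ ∃ (k : ℕ) (v : ℕ → ℕ), 2 ≤ k ∧
      (∀ t ≤ k, v t ∈ Finset.Icc 1 N) ∧
      v k = v 0 ∧
      (∀ t < k, v t ≠ v (t + 1)) ∧
      (∀ t ≤ k, v t ≠ 1) ∧
      (∀ t < k, X (v t) (v (t + 1)) = 1) := by
  rintro ⟨k, v, hk, hmem, hclosed, hne, hnot1, harc⟩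
  have hstep : ∀ t < k, u (v t) + 1 ≤ u (v (t + 1)) := by
    intro t ht
    have h := hmtz (v t) (hmem t ht.le) (v (t + 1)) (hmem (t + 1) ht)
      (hnot1 t ht.le) (hnot1 (t + 1) ht) (hne t ht)
    rw [harc t ht] at h
    linarith
  have hmono : ∀ t ≤ k, u (v 0) + t ≤ u (v t) := by
    intro t
    induction t with
    | zero => simp
    | succ n ih =>
      intro h
      have h1 := ih (Nat.le_of_succ_le h)
      have h2 := hstep n (Nat.lt_of_succ_le h)
      push_cast
      push_cast at h1
      linarith
  have := hmono k le_rfl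
  rw [hclosed] at this
  have : (k : ℤ) ≤ 0 := by linarith
  omega
end

section
/- Let N ≥ 2 be an integer and let X_{ij} ∈ {0,1} be given for all ordered pairs of distinct indices i, j ∈ {1,…,N} such that (entry constraints) for every j, Σ_{i ≠ j} X_{ij} = 1, (exit constraints) for every i, Σ_{j ≠ i} X_{ij} = 1, and there exist integers u_1, …, u_N with u_1 = 1, 2 ≤ u_i ≤ N for i ≠ 1, and u_i − u_j + N·X_{ij} ≤ N − 1 for all i ≠ 1, j ≠ 1, i ≠ j. Then the map σ sending each i to the unique j with X_{ij} = 1 is a permutation of {1,…,N} that is a single cycle of length N; that is, the arcs with X_{ij} = 1 form a Hamiltonian directed cycle visiting every node exactly once. -/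
open Finset

private lemma uniq_one (s : Finset ℕ) (f : ℕ → ℤ)
    (h01 : ∀ x ∈ s, f x = 0 ∨ f x = 1) (hsum : ∑ x ∈ s, f x = 1) :
    ∃! x, x ∈ s ∧ f x = 1 := by
  have hex : ∃ x ∈ s, f x = 1 := by
    by_contra h
    push_neg at h
    have : ∑ x ∈ s, f x = 0 :=
      Finset.sum_eq_zero (fun x hx => (h01 x hx).resolve_right (h x hx))
    omega
  obtain ⟨a, ha, hfa⟩ := hex
  refine ⟨a, ⟨ha, hfa⟩, ?_⟩
  rintro b ⟨hb, hfb⟩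
  by_contra hne
  have hab : a ≠ b := fun h => hne h.symm
  have hsub : ({a, b} : Finset ℕ) ⊆ s := by
    intro x hx
    simp only [Finset.mem_insert, Finset.mem_singleton] at hx
    rcases hx with h | h <;> subst h <;> assumption
  have hpair : ∑ x ∈ ({a, b} : Finset ℕ), f x = 2 := by
    rw [Finset.sum_pair hab, hfa, hfb]; norm_num
  have h2 : (2 : ℤ) ≤ ∑ x ∈ s, f x := by
    have hmono : ∑ x ∈ ({a, b} : Finset ℕ), f x ≤ ∑ x ∈ s, f x :=
      Finset.sum_le_sum_of_subset_of_nonneg hsub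
        (fun x hx _ => by rcases h01 x hx with h | h <;> rw [h] <;> norm_num)
    omega
  omega

/-- Under the single-entry-single-exit constraints together with the
Miller–Tucker–Zemlin subtour-elimination constraints, the selected arcs
form a single Hamiltonian directed cycle: the map sending each node `i`
to the unique `j` with `X i j = 1` is a permutation of `{1, …, N}` that
is a single cycle of length `N`. -/
theorem stmt_3 (N : ℕ) (hN : 2 ≤ N) (X : ℕ → ℕ → ℤ)
    (hX : ∀ i ∈ Finset.Icc 1 N, ∀ j ∈ Finset.Icc 1 N, i ≠ j → X i j = 0 ∨ X i j = 1)
    (hentry : ∀ j ∈ Finset.Icc 1 N, ∑ i ∈ (Finset.Icc 1 N).erase j, X i j = 1)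
    (hexit : ∀ i ∈ Finset.Icc 1 N, ∑ j ∈ (Finset.Icc 1 N).erase i, X i j = 1)
    (hmtz : ∃ u : ℕ → ℤ, u 1 = 1 ∧
      (∀ i ∈ Finset.Icc 1 N, i ≠ 1 → 2 ≤ u i ∧ u i ≤ (N : ℤ)) ∧
      (∀ i ∈ Finset.Icc 1 N, ∀ j ∈ Finset.Icc 1 N, i ≠ 1 → j ≠ 1 → i ≠ j →
        u i - u j + (N : ℤ) * X i j ≤ (N : ℤ) - 1)) :
    (∀ i ∈ Finset.Icc 1 N, ∃! j, j ∈ Finset.Icc 1 N ∧ j ≠ i ∧ X i j = 1) ∧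
    ∀ σ : ℕ → ℕ,
      (∀ i ∈ Finset.Icc 1 N, σ i ∈ Finset.Icc 1 N ∧ σ i ≠ i ∧ X i (σ i) = 1) →
      Set.BijOn σ (Set.Icc 1 N) (Set.Icc 1 N) ∧
      ∀ i ∈ Finset.Icc 1 N, σ^[N] i = i ∧ ∀ m, 0 < m → m < N → σ^[m] i ≠ i := by
  obtain ⟨u, hu1, hu2, hu3⟩ := hmtz
  have part1 : ∀ i ∈ Finset.Icc 1 N, ∃! j, j ∈ Finset.Icc 1 N ∧ j ≠ i ∧ X i j = 1 := by
    intro i hi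
    have h01 : ∀ x ∈ (Finset.Icc 1 N).erase i, X i x = 0 ∨ X i x = 1 := by
      intro x hx
      rw [Finset.mem_erase] at hx
      exact hX i hi x hx.2 (Ne.symm hx.1)
    obtain ⟨j, ⟨hj, hXij⟩, huniq⟩ := uniq_one _ _ h01 (hexit i hi)
    rw [Finset.mem_erase] at hj
    refine ⟨j, ⟨hj.2, hj.1, hXij⟩, ?_⟩
    rintro y ⟨hy1, hy2, hy3⟩
    exact huniq y ⟨Finset.mem_erase.mpr ⟨hy2, hy1⟩, hy3⟩
  refine ⟨part1, ?_⟩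
  intro σ hσ
  have h1S : (1 : ℕ) ∈ Finset.Icc 1 N := by
    rw [Finset.mem_Icc]; omega
  have hσS : ∀ i ∈ Finset.Icc 1 N, σ i ∈ Finset.Icc 1 N := fun i hi => (hσ i hi).1
  -- injectivity of σ on the node set from entry constraints
  have hinj : ∀ a ∈ Finset.Icc 1 N, ∀ b ∈ Finset.Icc 1 N, σ a = σ b → a = b := by
    intro a ha b hb hab
    have hj := hσS a ha
    have h01 : ∀ x ∈ (Finset.Icc 1 N).erase (σ a), X x (σ a) = 0 ∨ X x (σ a) = 1 := by
      intro x hx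
      rw [Finset.mem_erase] at hx
      exact hX x hx.2 (σ a) hj hx.1
    obtain ⟨c, _, huniq⟩ := uniq_one _ _ h01 (hentry (σ a) hj)
    have hca : a = c := by
      apply huniq
      exact ⟨Finset.mem_erase.mpr ⟨Ne.symm (hσ a ha).2.1, ha⟩, (hσ a ha).2.2⟩
    have hcb : b = c := by
      apply huniq
      refine ⟨Finset.mem_erase.mpr ⟨?_, hb⟩, ?_⟩
      · rw [hab]; exact Ne.symm (hσ b hb).2.1
      · rw [hab]; exact (hσ b hb).2.2
    rw [hca, hcb]
  have hitS : ∀ m, ∀ i ∈ Finset.Icc 1 N, σ^[m] i ∈ Finset.Icc 1 N := by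
    intro m
    induction m with
    | zero => intro i hi; simpa using hi
    | succ m ih =>
      intro i hi
      rw [Function.iterate_succ_apply']
      exact hσS _ (ih i hi)
  have hitinj : ∀ m, ∀ a ∈ Finset.Icc 1 N, ∀ b ∈ Finset.Icc 1 N,
      σ^[m] a = σ^[m] b → a = b := by
    intro m
    induction m with
    | zero => intro a _ b _ h; simpa using h
    | succ m ih =>
      intro a ha b hb h
      rw [Function.iterate_succ_apply', Function.iterate_succ_apply'] at h
      exact ih a ha b hb (hinj _ (hitS m a ha) _ (hitS m b hb) h)
  -- MTZ: u strictly increases along arcs avoiding node 1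
  have hstep : ∀ i ∈ Finset.Icc 1 N, i ≠ 1 → σ i ≠ 1 → u i + 1 ≤ u (σ i) := by
    intro i hi hi1 hs1
    have h := hu3 i hi (σ i) (hσS i hi) hi1 hs1 (Ne.symm (hσ i hi).2.1)
    rw [(hσ i hi).2.2, mul_one] at h
    linarith
  have hchain : ∀ m, ∀ i ∈ Finset.Icc 1 N, (∀ t, t ≤ m → σ^[t] i ≠ 1) →
      u i + m ≤ u (σ^[m] i) := by
    intro m
    induction m with
    | zero => intro i hi _; simp
    | succ m ih =>
      intro i hi hne
      have h1 := ih i hi (fun t ht => hne t (le_trans ht (Nat.le_succ m)))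
      have hs1 : σ (σ^[m] i) ≠ 1 := by
        have h := hne (m + 1) le_rfl
        rwa [Function.iterate_succ_apply'] at h
      have h2 := hstep (σ^[m] i) (hitS m i hi) (hne m (Nat.le_succ m)) hs1
      rw [Function.iterate_succ_apply']
      push_cast
      linarith
  -- every node's orbit hits node 1
  have hhit : ∀ i ∈ Finset.Icc 1 N, i ≠ 1 → ∃ m, 1 ≤ m ∧ σ^[m] i = 1 := by
    intro i hi hi1
    by_contra h
    push_neg at h
    have hall : ∀ t, t ≤ N - 1 → σ^[t] i ≠ 1 := by
      intro t _
      rcases Nat.eq_zero_or_pos t with h0 | h1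
      · subst h0; simpa using hi1
      · exact h t h1
    have hc := hchain (N - 1) i hi hall
    have hb := (hu2 (σ^[N-1] i) (hitS (N-1) i hi) (hall (N-1) le_rfl)).2
    have hlb := (hu2 i hi hi1).1
    omega
  -- the orbit map of node 1 is injective on [0, N)
  have ginj : ∀ s t, s < t → t < N → σ^[s] 1 ≠ σ^[t] 1 := by
    intro s t hst htN heq
    set d := t - s with hd
    have hd1 : 1 ≤ d := by omega
    have hdN : d < N := by omega
    have hper : σ^[d] 1 = 1 := by
      have hkey : σ^[s] (σ^[d] 1) = σ^[s] 1 := by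
        rw [← Function.iterate_add_apply]
        have hsd : s + d = t := by omega
        rw [hsd, ← heq]
      exact hitinj s _ (hitS d 1 h1S) _ h1S hkey
    have hkd : ∀ k, σ^[k * d] 1 = 1 := by
      intro k
      induction k with
      | zero => simp
      | succ k ih =>
        have hk : (k + 1) * d = k * d + d := by ring
        rw [hk, Function.iterate_add_apply, hper, ih]
    have hsub : Finset.Icc 1 N ⊆ (Finset.range d).image (fun t => σ^[t] 1) := by
      intro i hi
      rcases eq_or_ne i 1 with h1 | h1
      · subst h1
        exact Finset.mem_image.mpr ⟨0, Finset.mem_range.mpr (by omega), by simp⟩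
      · obtain ⟨m, hm1, hm⟩ := hhit i hi h1
        have hme : m ≤ m * d := Nat.le_mul_of_pos_right m (by omega)
        have hie : i = σ^[m * d - m] 1 := by
          apply hitinj m i hi _ (hitS _ 1 h1S)
          rw [hm, ← Function.iterate_add_apply]
          have hmm : m + (m * d - m) = m * d := by omega
          rw [hmm, hkd m]
        set e := m * d - m with he
        have hdd : σ^[d * (e / d)] 1 = 1 := by rw [Nat.mul_comm]; exact hkd _
        have hmod : σ^[e] 1 = σ^[e % d] 1 := by
          conv_lhs => rw [← Nat.mod_add_div e d]
          rw [Function.iterate_add_apply, hdd]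
        rw [hie, hmod]
        exact Finset.mem_image.mpr ⟨e % d, Finset.mem_range.mpr (Nat.mod_lt _ (by omega)), rfl⟩
    have hcard := Finset.card_le_card hsub
    have hc1 : (Finset.Icc 1 N).card = N := by rw [Nat.card_Icc]; omega
    have hc2 : ((Finset.range d).image (fun t => σ^[t] 1)).card ≤ d :=
      le_trans Finset.card_image_le (by simp)
    omega
  -- the orbit of 1 covers all nodes
  have horb : (Finset.range N).image (fun t => σ^[t] 1) = Finset.Icc 1 N := by
    apply Finset.eq_of_subset_of_card_le
    · intro x hx
      obtain ⟨t, _, rfl⟩ := Finset.mem_image.mp hx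
      exact hitS t 1 h1S
    · rw [Nat.card_Icc, Finset.card_image_of_injOn, Finset.card_range]
      · omega
      · intro a ha b hb hab
        simp only [Finset.coe_range, Set.mem_Iio] at ha hb
        rcases lt_trichotomy a b with h | h | h
        · exact absurd hab (ginj a b h hb)
        · exact h
        · exact absurd hab.symm (ginj b a h ha)
  have hN1 : σ^[N] 1 = 1 := by
    have hmem : σ^[N] 1 ∈ Finset.Icc 1 N := hitS N 1 h1S
    rw [← horb] at hmem
    obtain ⟨t, ht, heq⟩ := Finset.mem_image.mp hmem
    rw [Finset.mem_range] at ht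
    rcases Nat.eq_zero_or_pos t with h0 | h1
    · subst h0; exact (by simpa using heq : (1 : ℕ) = σ^[N] 1).symm
    · exfalso
      have hkey : σ^[t] (σ^[N - t] 1) = σ^[t] 1 := by
        rw [← Function.iterate_add_apply]
        have htn : t + (N - t) = N := by omega
        rw [htn, heq]
      have h2 := hitinj t _ (hitS _ 1 h1S) _ h1S hkey
      exact ginj 0 (N - t) (by omega) (by omega) (by simpa using h2.symm)
  have hperiod : ∀ i ∈ Finset.Icc 1 N, σ^[N] i = i ∧ ∀ m, 0 < m → m < N → σ^[m] i ≠ i := by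
    intro i hi
    have hi' : i ∈ (Finset.range N).image (fun t => σ^[t] 1) := by rw [horb]; exact hi
    obtain ⟨t, ht, hti⟩ := Finset.mem_image.mp hi'
    rw [Finset.mem_range] at ht
    constructor
    · rw [← hti, ← Function.iterate_add_apply]
      have hnt : N + t = t + N := by omega
      rw [hnt, Function.iterate_add_apply, hN1]
    · intro m hm0 hmN hcontra
      have hkey : σ^[t] (σ^[m] 1) = σ^[t] 1 := by
        rw [← Function.iterate_add_apply]
        have htm : t + m = m + t := by omega
        rw [htm, Function.iterate_add_apply, hti, hcontra]
      have h2 := hitinj t _ (hitS m 1 h1S) _ h1S hkey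
      exact ginj 0 m hm0 hmN (by simpa using h2.symm)
  have hsurj : ∀ j ∈ Finset.Icc 1 N, ∃ x ∈ Finset.Icc 1 N, σ x = j := by
    intro j hj
    refine ⟨σ^[N - 1] j, hitS _ j hj, ?_⟩
    have hs : σ^[N] j = σ (σ^[N - 1] j) := by
      conv_lhs => rw [show N = N - 1 + 1 from by omega]
      rw [Function.iterate_succ_apply']
    rw [← hs]
    exact (hperiod j hj).1
  have hconv : ∀ x : ℕ, x ∈ Set.Icc 1 N ↔ x ∈ Finset.Icc 1 N := by
    intro x; rw [Set.mem_Icc, Finset.mem_Icc]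
  refine ⟨⟨?_, ?_, ?_⟩, fun i hi => hperiod i hi⟩
  · intro x hx
    exact (hconv _).mpr (hσS x ((hconv _).mp hx))
  · intro a ha b hb hab
    exact hinj a ((hconv _).mp ha) b ((hconv _).mp hb) hab
  · intro j hj
    obtain ⟨x, hx, hxj⟩ := hsurj j ((hconv _).mp hj)
    exact ⟨x, (hconv _).mpr hx, hxj⟩
end
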